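/- Let K ⊂ ℝ² be compact with diam(K) ≤ d, d > 0. Let a : ℝ² → ℝ and f : ℝ² → ℝ be measurable and bounded with a(y) = f(y) = 0 for y ∉ K, and let δa ∈ L²(ℝ²) with δa(y) = 0 for y ∉ K. Then the function W(x) = |a(x)| ∫_{S¹} ∫₀^∞ |f(x+tθ)| exp(−∫₀^t a(x+sθ) ds) (∫₀^t |δa(x+sθ)| ds) dt dθ belongs to L²(ℝ²) and ‖W‖_{L²(ℝ²)} ≤ 4π d² e^{d‖a‖_∞} ‖a‖_∞ ‖f‖_∞ ‖δa‖_{L²(ℝ²)}. -/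

import Mathlib

set_option maxHeartbeats 1000000


open MeasureTheory Real Set
open scoped ENNReal

/-- The unit direction vector in `ℝ²` with angle `φ`; integrating over `φ ∈ (0, 2π]`
realizes integration over the unit circle `S¹` with its arclength measure. -/
noncomputable def dir (φ : ℝ) : EuclideanSpace ℝ (Fin 2) :=
  (WithLp.equiv 2 (Fin 2 → ℝ)).symm ![Real.cos φ, Real.sin φ]

lemma dir_cont : Continuous dir := by
  unfold dir
  exact (PiLp.continuous_toLp (p := 2) (β := fun _ : Fin 2 => ℝ)).comp
    (continuous_pi fun i => by fin_cases i <;> simp [Real.continuous_cos, Real.continuous_sin])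

lemma norm_dir (φ : ℝ) : ‖dir φ‖ = 1 := by
  rw [EuclideanSpace.norm_eq]
  simp [dir, Fin.sum_univ_two]

lemma mul_le_sq_add (x y : ℝ≥0∞) : x * y ≤ x ^ 2 + y ^ 2 := by
  rcases le_total x y with h | h
  · calc x * y ≤ y * y := mul_le_mul_left h y
    _ = y ^ 2 := (sq y).symm
    _ ≤ x ^ 2 + y ^ 2 := le_add_self
  · calc x * y ≤ x * x := mul_le_mul_right h x
    _ = x ^ 2 := (sq x).symm
    _ ≤ x ^ 2 + y ^ 2 := le_self_add


/-- For compact `K` with `diam K ≤ d`, bounded measurable `a, f` supported in `K` with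
`A = ‖a‖_∞`, `F = ‖f‖_∞`, and `δa ∈ L²` supported in `K`, the function
`W(x) = |a(x)| ∫_{S¹} ∫₀^∞ |f(x+tθ)| exp(−∫₀^t a(x+sθ) ds) (∫₀^t |δa(x+sθ)| ds) dt dθ`
is in `L²(ℝ²)` with `‖W‖_{L²} ≤ 4 π d² e^{d‖a‖_∞} ‖a‖_∞ ‖f‖_∞ ‖δa‖_{L²}`, expressed here
via lower Lebesgue integrals: `∫ W² ≤ (4 π d² e^{dA} A F)² ∫ |δa|²`. -/
theorem stmt9 (K : Set (EuclideanSpace ℝ (Fin 2))) (hK : IsCompact K)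
    (d : ℝ) (hd : Metric.diam K ≤ d) (hdpos : 0 < d)
    (a : EuclideanSpace ℝ (Fin 2) → ℝ) (hameas : Measurable a)
    (A : ℝ) (hA : IsLUB (Set.range fun y => |a y|) A)  -- `A = ‖a‖_∞`
    (hasupp : ∀ y ∉ K, a y = 0)
    (f : EuclideanSpace ℝ (Fin 2) → ℝ) (hfmeas : Measurable f)
    (F : ℝ) (hF : IsLUB (Set.range fun y => |f y|) F)  -- `F = ‖f‖_∞`
    (hfsupp : ∀ y ∉ K, f y = 0)
    (δa : EuclideanSpace ℝ (Fin 2) → ℝ) (hδa : MemLp δa 2 volume)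
    (hδasupp : ∀ y ∉ K, δa y = 0) :
    (∫⁻ x,
        ((‖a x‖₊ : ℝ≥0∞) *
          ∫⁻ φ in Set.Ioc 0 (2 * π), ∫⁻ t in Set.Ioi (0 : ℝ),
            ENNReal.ofReal (|f (x + t • dir φ)| *
                Real.exp (-∫ s in (0:ℝ)..t, a (x + s • dir φ))) *
              ∫⁻ s in Set.Ioc (0 : ℝ) t, (‖δa (x + s • dir φ)‖₊ : ℝ≥0∞)) ^ 2) ≤
      ENNReal.ofReal (4 * π * d ^ 2 * Real.exp (d * A) * A * F) ^ 2 *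
        ∫⁻ x, (‖δa x‖₊ : ℝ≥0∞) ^ 2 := by
  have haA : ∀ y, |a y| ≤ A := fun y => hA.1 ⟨y, rfl⟩
  have hfF : ∀ y, |f y| ≤ F := fun y => hF.1 ⟨y, rfl⟩
  have hA0 : 0 ≤ A := le_trans (abs_nonneg _) (haA 0)
  have hF0 : 0 ≤ F := le_trans (abs_nonneg _) (hfF 0)
  -- measurability of translations
  have hcmeas : Measurable fun ω : ℝ × ℝ => ω.2 • dir ω.1 :=
    measurable_snd.smul (dir_cont.measurable.comp measurable_fst)
  have hTmeas : Measurable fun p : (EuclideanSpace ℝ (Fin 2)) × (ℝ × ℝ) =>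
      p.1 + p.2.2 • dir p.2.1 :=
    measurable_fst.add (hcmeas.comp measurable_snd)
  -- measurable representative of δa
  have hg0 : AEMeasurable δa volume := hδa.aestronglyMeasurable.aemeasurable
  set g : EuclideanSpace ℝ (Fin 2) → ℝ := hg0.mk δa with hgdef
  have hgmeas : Measurable g := hg0.measurable_mk
  have hgeq : δa =ᵐ[volume] g := hg0.ae_eq_mk
  obtain ⟨N, hNsub, hNmeas, hNnull⟩ :=
    exists_measurable_superset_of_null (ae_iff.1 hgeq)
  set S : ℝ≥0∞ := ∫⁻ y, (‖g y‖₊ : ℝ≥0∞) ^ 2 with hSdef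
  have hSδ : ∫⁻ y, (‖δa y‖₊ : ℝ≥0∞) ^ 2 = S :=
    lintegral_congr_ae (hgeq.mono fun y hy => by simp [hy])
  -- measures
  set ν1 : Measure ℝ := volume.restrict (Ioc (0:ℝ) (2*π)) with hν1
  set ν2 : Measure ℝ := volume.restrict (Ioc (0:ℝ) d) with hν2
  set μ : Measure (ℝ × ℝ) := ν1.prod ν2 with hμ
  have hμuniv : μ univ = ENNReal.ofReal (2*π) * ENNReal.ofReal d := by
    rw [hμ, ← Set.univ_prod_univ, Measure.prod_prod, hν1, hν2]
    simp [Real.volume_Ioc]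
  -- the iterated integrals of δa and g agree a.e.
  set Jδ : EuclideanSpace ℝ (Fin 2) → ℝ≥0∞ := fun x =>
    ∫⁻ φ in Ioc (0:ℝ) (2*π), ∫⁻ s in Ioc (0:ℝ) d, (‖δa (x + s • dir φ)‖₊ : ℝ≥0∞) with hJδ
  set Jg : EuclideanSpace ℝ (Fin 2) → ℝ≥0∞ := fun x =>
    ∫⁻ ω, (‖g (x + ω.2 • dir ω.1)‖₊ : ℝ≥0∞) ∂μ with hJg
  have hJae : ∀ᵐ x, Jδ x = Jg x := by
    have hindmeas : Measurable fun p : (EuclideanSpace ℝ (Fin 2)) × (ℝ × ℝ) =>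
        N.indicator (1 : EuclideanSpace ℝ (Fin 2) → ℝ≥0∞) (p.1 + p.2.2 • dir p.2.1) :=
      (measurable_one.indicator hNmeas).comp hTmeas
    have hZ : ∫⁻ x, ∫⁻ ω, N.indicator 1 (x + ω.2 • dir ω.1) ∂μ = 0 := by
      rw [lintegral_lintegral_swap hindmeas.aemeasurable]
      have h1 : ∀ ω : ℝ × ℝ,
          ∫⁻ x, N.indicator (1 : EuclideanSpace ℝ (Fin 2) → ℝ≥0∞) (x + ω.2 • dir ω.1) = 0 := by
        intro ω
        rw [lintegral_add_right_eq_self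
          (fun y => N.indicator (1 : EuclideanSpace ℝ (Fin 2) → ℝ≥0∞) y) (ω.2 • dir ω.1)]
        simp [lintegral_indicator, hNmeas, hNnull]
      simp [h1]
    have hm1 : Measurable fun x : EuclideanSpace ℝ (Fin 2) =>
        ∫⁻ ω, N.indicator 1 (x + ω.2 • dir ω.1) ∂μ :=
      hindmeas.lintegral_prod_right'
    have hx0 : ∀ᵐ x, ∫⁻ ω, N.indicator 1 (x + ω.2 • dir ω.1) ∂μ = 0 :=
      (lintegral_eq_zero_iff hm1).1 hZ
    filter_upwards [hx0] with x hx
    have hxmeas : Measurable fun ω : ℝ × ℝ =>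
        N.indicator (1 : EuclideanSpace ℝ (Fin 2) → ℝ≥0∞) (x + ω.2 • dir ω.1) :=
      hindmeas.comp measurable_prodMk_left
    have hxit : ∫⁻ φ in Ioc (0:ℝ) (2*π), ∫⁻ s in Ioc (0:ℝ) d,
        N.indicator (1 : EuclideanSpace ℝ (Fin 2) → ℝ≥0∞) (x + s • dir φ) = 0 := by
      rw [← lintegral_prod _ hxmeas.aemeasurable]
      exact hx
    have hmφ : Measurable fun φ : ℝ => ∫⁻ s in Ioc (0:ℝ) d,
        N.indicator (1 : EuclideanSpace ℝ (Fin 2) → ℝ≥0∞) (x + s • dir φ) :=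
      Measurable.lintegral_prod_right' (f := fun q : ℝ × ℝ =>
        N.indicator (1 : EuclideanSpace ℝ (Fin 2) → ℝ≥0∞) (x + q.2 • dir q.1)) hxmeas
    have hφ0 : ∀ᵐ φ ∂ν1, ∫⁻ s in Ioc (0:ℝ) d,
        N.indicator (1 : EuclideanSpace ℝ (Fin 2) → ℝ≥0∞) (x + s • dir φ) = 0 :=
      (lintegral_eq_zero_iff hmφ).1 hxit
    have hiter : Jδ x = ∫⁻ φ in Ioc (0:ℝ) (2*π), ∫⁻ s in Ioc (0:ℝ) d,
        (‖g (x + s • dir φ)‖₊ : ℝ≥0∞) := by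
      refine lintegral_congr_ae ?_
      filter_upwards [hφ0] with φ hφ
      have hms : Measurable fun s : ℝ =>
          N.indicator (1 : EuclideanSpace ℝ (Fin 2) → ℝ≥0∞) (x + s • dir φ) :=
        (measurable_one.indicator hNmeas).comp
          (measurable_const.add (measurable_id.smul measurable_const))
      have hs0 : ∀ᵐ s ∂ν2,
          N.indicator (1 : EuclideanSpace ℝ (Fin 2) → ℝ≥0∞) (x + s • dir φ) = 0 :=
        (lintegral_eq_zero_iff hms).1 hφ
      refine lintegral_congr_ae ?_
      filter_upwards [hs0] with s hs
      have hnotN : x + s • dir φ ∉ N := by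
        intro hmem
        rw [Set.indicator_of_mem hmem] at hs
        exact one_ne_zero hs
      have : δa (x + s • dir φ) = g (x + s • dir φ) := by
        by_contra hne
        exact hnotN (hNsub hne)
      rw [this]
    have hmg : Measurable fun ω : ℝ × ℝ => (‖g (x + ω.2 • dir ω.1)‖₊ : ℝ≥0∞) :=
      (hgmeas.comp (measurable_const.add hcmeas)).enorm
    rw [hiter]
    exact (lintegral_prod _ hmg.aemeasurable).symm
  -- pointwise bound
  have hpt : ∀ x, ((‖a x‖₊ : ℝ≥0∞) *
      ∫⁻ φ in Set.Ioc 0 (2 * π), ∫⁻ t in Set.Ioi (0 : ℝ),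
        ENNReal.ofReal (|f (x + t • dir φ)| *
            Real.exp (-∫ s in (0:ℝ)..t, a (x + s • dir φ))) *
          ∫⁻ s in Set.Ioc (0 : ℝ) t, (‖δa (x + s • dir φ)‖₊ : ℝ≥0∞)) ≤
      ENNReal.ofReal (A * (F * Real.exp (d*A)) * d) * Jδ x := by
    intro x
    by_cases hxK : x ∈ K
    · have h1 : ∀ φ : ℝ, (∫⁻ t in Set.Ioi (0 : ℝ),
          ENNReal.ofReal (|f (x + t • dir φ)| *
              Real.exp (-∫ s in (0:ℝ)..t, a (x + s • dir φ))) *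
            ∫⁻ s in Set.Ioc (0 : ℝ) t, (‖δa (x + s • dir φ)‖₊ : ℝ≥0∞)) ≤
          ENNReal.ofReal (F * Real.exp (d*A)) * ENNReal.ofReal d *
            ∫⁻ s in Ioc (0:ℝ) d, (‖δa (x + s • dir φ)‖₊ : ℝ≥0∞) := by
        intro φ
        have key : ∀ t ∈ Ioi (0:ℝ),
            ENNReal.ofReal (|f (x + t • dir φ)| *
                Real.exp (-∫ s in (0:ℝ)..t, a (x + s • dir φ))) *
              (∫⁻ s in Set.Ioc (0 : ℝ) t, (‖δa (x + s • dir φ)‖₊ : ℝ≥0∞)) ≤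
            (Ioc (0:ℝ) d).indicator (fun _ =>
              ENNReal.ofReal (F * Real.exp (d*A)) *
                ∫⁻ s in Ioc (0:ℝ) d, (‖δa (x + s • dir φ)‖₊ : ℝ≥0∞)) t := by
          intro t ht
          rcases le_or_gt t d with htd | htd
          · rw [Set.indicator_of_mem (Set.mem_Ioc.2 ⟨Set.mem_Ioi.1 ht, htd⟩)]
            refine mul_le_mul' ?_ ?_
            · refine ENNReal.ofReal_le_ofReal ?_
              refine mul_le_mul (hfF _) ?_ (Real.exp_pos _).le hF0
              refine Real.exp_le_exp.2 ?_
              have hnorm := intervalIntegral.norm_integral_le_of_norm_le_const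
                (a := (0:ℝ)) (b := t) (C := A)
                (f := fun s => a (x + s • dir φ)) (fun s _ => by
                  rw [Real.norm_eq_abs]; exact haA _)
              rw [sub_zero] at hnorm
              have h2 : |∫ s in (0:ℝ)..t, a (x + s • dir φ)| ≤ A * t := by
                rw [abs_of_pos ht] at hnorm
                simpa [Real.norm_eq_abs] using hnorm
              have h3 : A * t ≤ d * A := by
                rw [mul_comm d A]
                exact mul_le_mul_of_nonneg_left htd hA0
              calc -∫ s in (0:ℝ)..t, a (x + s • dir φ)
                  ≤ |∫ s in (0:ℝ)..t, a (x + s • dir φ)| := neg_le_abs _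
                _ ≤ A * t := h2
                _ ≤ d * A := h3
            · exact lintegral_mono_set (Ioc_subset_Ioc_right htd)
          · have hnotK : x + t • dir φ ∉ K := by
              intro hmem
              have hdist : dist x (x + t • dir φ) ≤ d :=
                le_trans (Metric.dist_le_diam_of_mem hK.isBounded hxK hmem) hd
              rw [dist_self_add_right, norm_smul, norm_dir, Real.norm_eq_abs,
                abs_of_pos ht, mul_one] at hdist
              exact absurd hdist (not_le.2 htd)
            rw [hfsupp _ hnotK]
            simp
        calc (∫⁻ t in Set.Ioi (0 : ℝ),
            ENNReal.ofReal (|f (x + t • dir φ)| *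
                Real.exp (-∫ s in (0:ℝ)..t, a (x + s • dir φ))) *
              ∫⁻ s in Set.Ioc (0 : ℝ) t, (‖δa (x + s • dir φ)‖₊ : ℝ≥0∞))
            ≤ ∫⁻ t in Set.Ioi (0 : ℝ), (Ioc (0:ℝ) d).indicator (fun _ =>
              ENNReal.ofReal (F * Real.exp (d*A)) *
                ∫⁻ s in Ioc (0:ℝ) d, (‖δa (x + s • dir φ)‖₊ : ℝ≥0∞)) t :=
            lintegral_mono_ae ((ae_restrict_iff' measurableSet_Ioi).2 (ae_of_all _ key))
          _ = ENNReal.ofReal (F * Real.exp (d*A)) * ENNReal.ofReal d *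
              ∫⁻ s in Ioc (0:ℝ) d, (‖δa (x + s • dir φ)‖₊ : ℝ≥0∞) := by
            rw [lintegral_indicator measurableSet_Ioc, Measure.restrict_restrict
              measurableSet_Ioc]
            have hinter : Ioc (0:ℝ) d ∩ Ioi 0 = Ioc 0 d :=
              inter_eq_left.2 Ioc_subset_Ioi_self
            rw [hinter, setLIntegral_const, Real.volume_Ioc, sub_zero]
            ring
      have ha' : (‖a x‖₊ : ℝ≥0∞) ≤ ENNReal.ofReal A := by
        rw [← ENNReal.ofReal_coe_nnreal, coe_nnnorm]
        exact ENNReal.ofReal_le_ofReal (by rw [Real.norm_eq_abs]; exact haA x)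
      calc (‖a x‖₊ : ℝ≥0∞) * ∫⁻ φ in Set.Ioc 0 (2 * π), ∫⁻ t in Set.Ioi (0 : ℝ),
            ENNReal.ofReal (|f (x + t • dir φ)| *
                Real.exp (-∫ s in (0:ℝ)..t, a (x + s • dir φ))) *
              ∫⁻ s in Set.Ioc (0 : ℝ) t, (‖δa (x + s • dir φ)‖₊ : ℝ≥0∞)
          ≤ ENNReal.ofReal A * ∫⁻ φ in Ioc (0:ℝ) (2*π),
            (ENNReal.ofReal (F * Real.exp (d*A)) * ENNReal.ofReal d *
              ∫⁻ s in Ioc (0:ℝ) d, (‖δa (x + s • dir φ)‖₊ : ℝ≥0∞)) :=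
          mul_le_mul' ha' (lintegral_mono h1)
        _ = ENNReal.ofReal (A * (F * Real.exp (d*A)) * d) * Jδ x := by
          rw [lintegral_const_mul' _ _
            (ENNReal.mul_ne_top ENNReal.ofReal_ne_top ENNReal.ofReal_ne_top)]
          have : ENNReal.ofReal (A * (F * Real.exp (d*A)) * d) =
              ENNReal.ofReal A * (ENNReal.ofReal (F * Real.exp (d*A)) * ENNReal.ofReal d) := by
            rw [ENNReal.ofReal_mul (by positivity), ENNReal.ofReal_mul hA0, mul_assoc]
          rw [this, hJδ]
          ring
    · have : a x = 0 := hasupp x hxK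
      simp [this]

  -- L² bound on Jg
  have hJg2 : ∫⁻ x, Jg x ^ 2 ≤ (μ univ) ^ 2 * (2 * S) := by
    set h : EuclideanSpace ℝ (Fin 2) → ℝ × ℝ → ℝ≥0∞ :=
      fun x ω => (‖g (x + ω.2 • dir ω.1)‖₊ : ℝ≥0∞) with hh
    have hmh : Measurable fun p : EuclideanSpace ℝ (Fin 2) × (ℝ × ℝ) => h p.1 p.2 :=
      (hgmeas.comp hTmeas).enorm
    have hexp : ∀ x, Jg x ^ 2 = ∫⁻ ω, ∫⁻ ω', h x ω * h x ω' ∂μ ∂μ := by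
      intro x
      have hmgx : Measurable fun ω => h x ω := hmh.comp measurable_prodMk_left
      have e1 : Jg x ^ 2 = ∫⁻ ω, h x ω * Jg x ∂μ := by
        rw [sq, lintegral_mul_const'' _ hmgx.aemeasurable]
      rw [e1]
      refine lintegral_congr fun ω => ?_
      rw [lintegral_const_mul' _ _ ENNReal.coe_ne_top]
    have hswap1 : ∫⁻ x, ∫⁻ ω, (∫⁻ ω', h x ω * h x ω' ∂μ) ∂μ =
        ∫⁻ ω, (∫⁻ x, ∫⁻ ω', h x ω * h x ω' ∂μ) ∂μ := by
      refine lintegral_lintegral_swap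
        (f := fun x ω => ∫⁻ ω', h x ω * h x ω' ∂μ) ?_
      refine Measurable.aemeasurable ?_
      exact Measurable.lintegral_prod_right'
        (f := fun q : (EuclideanSpace ℝ (Fin 2) × (ℝ × ℝ)) × (ℝ × ℝ) =>
          h q.1.1 q.1.2 * h q.1.1 q.2)
        ((hmh.comp ((measurable_fst.fst).prodMk measurable_fst.snd)).mul
          (hmh.comp ((measurable_fst.fst).prodMk measurable_snd)))
    have hswap2 : ∀ ω : ℝ × ℝ, ∫⁻ x, (∫⁻ ω', h x ω * h x ω' ∂μ) =
        ∫⁻ ω', (∫⁻ x, h x ω * h x ω') ∂μ := by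
      intro ω
      refine lintegral_lintegral_swap
        (f := fun x ω' => h x ω * h x ω') ?_
      refine Measurable.aemeasurable ?_
      exact (hmh.comp (measurable_fst.prodMk measurable_const)).mul hmh
    have hinner : ∀ ω ω' : ℝ × ℝ, ∫⁻ x, h x ω * h x ω' ≤ 2 * S := by
      intro ω ω'
      calc ∫⁻ x, h x ω * h x ω' ≤ ∫⁻ x, (h x ω ^ 2 + h x ω' ^ 2) :=
        lintegral_mono fun x => mul_le_sq_add _ _
      _ = (∫⁻ x, h x ω ^ 2) + ∫⁻ x, h x ω' ^ 2 := by
        exact lintegral_add_left ((hmh.comp (measurable_id.prodMk measurable_const)).pow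
          measurable_const) _
      _ = S + S := by
        rw [hh]
        rw [lintegral_add_right_eq_self (fun y => (‖g y‖₊ : ℝ≥0∞) ^ 2) (ω.2 • dir ω.1),
          lintegral_add_right_eq_self (fun y => (‖g y‖₊ : ℝ≥0∞) ^ 2) (ω'.2 • dir ω'.1)]
      _ = 2 * S := by ring
    calc ∫⁻ x, Jg x ^ 2 = ∫⁻ x, ∫⁻ ω, (∫⁻ ω', h x ω * h x ω' ∂μ) ∂μ :=
        lintegral_congr fun x => hexp x
      _ = ∫⁻ ω, (∫⁻ x, ∫⁻ ω', h x ω * h x ω' ∂μ) ∂μ := hswap1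
      _ = ∫⁻ ω, (∫⁻ ω', (∫⁻ x, h x ω * h x ω') ∂μ) ∂μ :=
        lintegral_congr fun ω => hswap2 ω
      _ ≤ ∫⁻ _ω, (∫⁻ _ω', 2 * S ∂μ) ∂μ :=
        lintegral_mono fun ω => lintegral_mono fun ω' => hinner ω ω'
      _ = (μ univ) ^ 2 * (2 * S) := by
        rw [lintegral_const, lintegral_const]
        ring
  -- combine
  set C1 : ℝ≥0∞ := ENNReal.ofReal (A * (F * Real.exp (d*A)) * d) with hC1
  set y : ℝ≥0∞ := ENNReal.ofReal (2*π*d^2*Real.exp (d*A)*A*F) with hy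
  have hXy : C1 * (ENNReal.ofReal (2*π) * ENNReal.ofReal d) = y := by
    rw [hC1, hy, ← ENNReal.ofReal_mul (by positivity), ← ENNReal.ofReal_mul (by positivity)]
    congr 1
    ring
  have h4 : ENNReal.ofReal (4*π*d^2*Real.exp (d*A)*A*F) = 2 * y := by
    have he : (4*π*d^2*Real.exp (d*A)*A*F) = 2 * (2*π*d^2*Real.exp (d*A)*A*F) := by ring
    rw [he, ENNReal.ofReal_mul (by norm_num), hy]
    norm_num
  calc (∫⁻ x,
        ((‖a x‖₊ : ℝ≥0∞) *
          ∫⁻ φ in Set.Ioc 0 (2 * π), ∫⁻ t in Set.Ioi (0 : ℝ),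
            ENNReal.ofReal (|f (x + t • dir φ)| *
                Real.exp (-∫ s in (0:ℝ)..t, a (x + s • dir φ))) *
              ∫⁻ s in Set.Ioc (0 : ℝ) t, (‖δa (x + s • dir φ)‖₊ : ℝ≥0∞)) ^ 2)
      ≤ ∫⁻ x, (C1 * Jδ x) ^ 2 := lintegral_mono fun x => pow_le_pow_left' (hpt x) 2
    _ = ∫⁻ x, (C1 * Jg x) ^ 2 :=
      lintegral_congr_ae (hJae.mono fun x hx => by simp only []; rw [hx])
    _ = ∫⁻ x, C1 ^ 2 * Jg x ^ 2 := lintegral_congr fun x => mul_pow _ _ 2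
    _ = C1 ^ 2 * ∫⁻ x, Jg x ^ 2 :=
      lintegral_const_mul' _ _ (ENNReal.pow_ne_top ENNReal.ofReal_ne_top)
    _ ≤ C1 ^ 2 * ((μ univ) ^ 2 * (2 * S)) := mul_le_mul_right hJg2 _
    _ = y ^ 2 * (2 * S) := by rw [hμuniv, ← hXy]; ring
    _ ≤ (2 * y) ^ 2 * S := by
      have e1 : y ^ 2 * (2 * S) = 2 * (y ^ 2 * S) := by ring
      have e2 : (2 * y) ^ 2 * S = 4 * (y ^ 2 * S) := by ring
      rw [e1, e2]
      exact mul_le_mul_left (by norm_num) _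
    _ = ENNReal.ofReal (4 * π * d ^ 2 * Real.exp (d * A) * A * F) ^ 2 *
        ∫⁻ x, (‖δa x‖₊ : ℝ≥0∞) ^ 2 := by rw [h4, hSδ]
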